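/- arXiv:1409.3165 — 2 statements merged into one kernel-verified Lean document; each statement's English description precedes it below -/
import Mathlib

section
/- Let a_n be the number of permutations of length n avoiding the mesh pattern (12, {(0,0),(0,1),(1,0),(1,1),(1,2)}). Then a_0 = 1, a_1 = 1, and a_n = n·a_{n−1} − a_{n−2} for all n ≥ 2. -/
/-- 1-based position boundaries of an occurrence: `posOf x 0 = 0`,
`posOf x i = x_i` (1-based) for `1 ≤ i ≤ k`, and `posOf x i = n+1` for `i > k`. -/
def posOf {k n : ℕ} (x : Fin k → Fin n) (i : ℕ) : ℕ :=
  if h : 1 ≤ i ∧ i ≤ k then (x ⟨i - 1, by omega⟩ : ℕ) + 1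
  else if i = 0 then 0 else n + 1

/-- 1-based value boundaries of an occurrence: `valOf τ x π 0 = 0`,
`valOf τ x π j = y_j`, the `j`-th smallest of the values `π(x_1),…,π(x_k)`
(which equals `π(x_{τ⁻¹(j)})` for an occurrence of the classical pattern `τ`),
and `n+1` for `j > k`. -/
def valOf {k n : ℕ} (τ : Equiv.Perm (Fin k)) (x : Fin k → Fin n)
    (π : Equiv.Perm (Fin n)) (j : ℕ) : ℕ :=
  if h : 1 ≤ j ∧ j ≤ k then (π (x (τ.symm ⟨j - 1, by omega⟩)) : ℕ) + 1
  else if j = 0 then 0 else n + 1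

/-- `π` (a permutation of length `n`, 0-indexed via `Fin n`) contains the mesh
pattern `(τ, R)`, where boxes in `R` are given with 0-based coordinates in `[0,k]²`.
All positions/values are converted to 1-based via `+1`. -/
def MeshOccursIn {k n : ℕ} (τ : Equiv.Perm (Fin k)) (R : Set (ℕ × ℕ))
    (π : Equiv.Perm (Fin n)) : Prop :=
  ∃ x : Fin k → Fin n, StrictMono x ∧
    (∀ a b : Fin k, π (x a) < π (x b) ↔ τ a < τ b) ∧
    ∀ r ∈ R, ∀ z : Fin n,
      ¬ (posOf x r.1 < (z : ℕ) + 1 ∧ (z : ℕ) + 1 < posOf x (r.1 + 1) ∧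
         valOf τ x π r.2 < (π z : ℕ) + 1 ∧ (π z : ℕ) + 1 < valOf τ x π (r.2 + 1))

/-- `π` avoids the mesh pattern `(τ, R)`. -/
def MeshAvoids {k n : ℕ} (τ : Equiv.Perm (Fin k)) (R : Set (ℕ × ℕ))
    (π : Equiv.Perm (Fin n)) : Prop := ¬ MeshOccursIn τ R π

namespace Stmt18Aux

/-- The concrete form of containment of our mesh pattern: an ascent in adjacent
positions whose top is smaller than every entry strictly before the ascent. -/
def Bad {n : ℕ} (π : Equiv.Perm (Fin n)) : Prop :=
  ∃ i j : Fin n, (i : ℕ) + 1 = (j : ℕ) ∧ π i < π j ∧ ∀ z : Fin n, z < i → π j < π z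

instance {n : ℕ} (π : Equiv.Perm (Fin n)) : Decidable (Bad π) := by
  unfold Bad; infer_instance

lemma mesh_iff_bad {n : ℕ} (π : Equiv.Perm (Fin n)) :
    MeshOccursIn (1 : Equiv.Perm (Fin 2))
      ({(0,0),(0,1),(1,0),(1,1),(1,2)} : Set (ℕ × ℕ)) π ↔ Bad π := by
  have hmem : ∀ r : ℕ × ℕ, r ∈ ({(0,0),(0,1),(1,0),(1,1),(1,2)} : Set (ℕ × ℕ)) ↔
      (r = (0,0) ∨ r = (0,1) ∨ r = (1,0) ∨ r = (1,1) ∨ r = (1,2)) := by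
    intro r; simp [Set.mem_insert_iff]
  constructor
  · rintro ⟨x, hmono, hord, hbox⟩
    have h01 : x 0 < x 1 := hmono (by decide)
    have h01' : (x 0 : ℕ) < (x 1 : ℕ) := Fin.lt_def.mp h01
    have hπ : π (x 0) < π (x 1) := (hord 0 1).mpr (by decide)
    refine ⟨x 0, x 1, ?_, hπ, ?_⟩
    · by_contra hne
      have hlt : (x 0 : ℕ) + 1 < (x 1 : ℕ) := by omega
      set z : Fin n := ⟨(x 0 : ℕ) + 1, by have := (x 1).isLt; omega⟩ with hzdef
      have hzval : (z : ℕ) = (x 0 : ℕ) + 1 := rfl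
      have hz0 : z ≠ x 0 := Fin.ne_of_val_ne (by omega)
      have hz1 : z ≠ x 1 := Fin.ne_of_val_ne (by omega)
      have hv0 : π z ≠ π (x 0) := fun h => hz0 (π.injective h)
      have hv1 : π z ≠ π (x 1) := fun h => hz1 (π.injective h)
      rcases lt_trichotomy (π z) (π (x 0)) with h | h | h
      · exact hbox (1,0) ((hmem _).mpr (by tauto)) z
          ⟨by show (x 0 : ℕ) + 1 < _; omega,
           by show (z : ℕ) + 1 < (x 1 : ℕ) + 1; omega,
           by show (0:ℕ) < _; omega,
           by show (π z : ℕ) + 1 < (π (x 0) : ℕ) + 1; have := Fin.lt_def.mp h; omega⟩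
      · exact hv0 h
      · rcases lt_trichotomy (π z) (π (x 1)) with h' | h' | h'
        · exact hbox (1,1) ((hmem _).mpr (by tauto)) z
            ⟨by show (x 0 : ℕ) + 1 < _; omega,
             by show (z : ℕ) + 1 < (x 1 : ℕ) + 1; omega,
             by show (π (x 0) : ℕ) + 1 < _; have := Fin.lt_def.mp h; omega,
             by show (π z : ℕ) + 1 < (π (x 1) : ℕ) + 1; have := Fin.lt_def.mp h'; omega⟩
        · exact hv1 h'
        · exact hbox (1,2) ((hmem _).mpr (by tauto)) z
            ⟨by show (x 0 : ℕ) + 1 < _; omega,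
             by show (z : ℕ) + 1 < (x 1 : ℕ) + 1; omega,
             by show (π (x 1) : ℕ) + 1 < _; have := Fin.lt_def.mp h'; omega,
             by show (π z : ℕ) + 1 < n + 1; have := (π z).isLt; omega⟩
    · intro z hz
      have hzlt : (z : ℕ) < (x 0 : ℕ) := Fin.lt_def.mp hz
      have hz0 : z ≠ x 0 := ne_of_lt hz
      have hz1 : z ≠ x 1 := ne_of_lt (lt_trans hz h01)
      have hv0 : π z ≠ π (x 0) := fun h => hz0 (π.injective h)
      have hv1 : π z ≠ π (x 1) := fun h => hz1 (π.injective h)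
      rcases lt_trichotomy (π z) (π (x 0)) with h | h | h
      · exact absurd
          (⟨by show (0:ℕ) < _; omega,
            by show (z : ℕ) + 1 < (x 0 : ℕ) + 1; omega,
            by show (0:ℕ) < _; omega,
            by show (π z : ℕ) + 1 < (π (x 0) : ℕ) + 1; have := Fin.lt_def.mp h; omega⟩)
          (hbox (0,0) ((hmem _).mpr (by tauto)) z)
      · exact absurd h hv0
      · rcases lt_trichotomy (π z) (π (x 1)) with h' | h' | h'
        · exact absurd
            (⟨by show (0:ℕ) < _; omega,
              by show (z : ℕ) + 1 < (x 0 : ℕ) + 1; omega,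
              by show (π (x 0) : ℕ) + 1 < _; have := Fin.lt_def.mp h; omega,
              by show (π z : ℕ) + 1 < (π (x 1) : ℕ) + 1; have := Fin.lt_def.mp h'; omega⟩)
            (hbox (0,1) ((hmem _).mpr (by tauto)) z)
        · exact absurd h' hv1
        · exact h'
  · rintro ⟨i, j, hij, hlt, hall⟩
    have hijf : i < j := Fin.lt_def.mpr (by omega)
    refine ⟨![i, j], ?_, ?_, ?_⟩
    · intro a b hab
      fin_cases a <;> fin_cases b <;>
        simp only [Matrix.cons_val_zero, Matrix.cons_val_one, Matrix.head_cons] <;>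
        first
          | exact absurd hab (by decide)
          | exact hijf
    · intro a b
      fin_cases a <;> fin_cases b <;>
        simp only [Matrix.cons_val_zero, Matrix.cons_val_one, Matrix.head_cons] <;>
        first
          | exact iff_of_true hlt (by decide)
          | exact iff_of_false (lt_irrefl _) (by decide)
          | exact iff_of_false (asymm hlt) (by decide)
    · intro r hr z
      have hπv := Fin.lt_def.mp hlt
      rcases (hmem r).mp hr with rfl | rfl | rfl | rfl | rfl <;> rintro ⟨c1, c2, c3, c4⟩
      · have hc2 : (z : ℕ) + 1 < (i : ℕ) + 1 := c2
        have hc4 : (π z : ℕ) + 1 < (π i : ℕ) + 1 := c4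
        have := Fin.lt_def.mp (hall z (Fin.lt_def.mpr (by omega)))
        omega
      · have hc2 : (z : ℕ) + 1 < (i : ℕ) + 1 := c2
        have hc4 : (π z : ℕ) + 1 < (π j : ℕ) + 1 := c4
        have := Fin.lt_def.mp (hall z (Fin.lt_def.mpr (by omega)))
        omega
      · have hc1 : (i : ℕ) + 1 < (z : ℕ) + 1 := c1
        have hc2 : (z : ℕ) + 1 < (j : ℕ) + 1 := c2
        omega
      · have hc1 : (i : ℕ) + 1 < (z : ℕ) + 1 := c1
        have hc2 : (z : ℕ) + 1 < (j : ℕ) + 1 := c2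
        omega
      · have hc1 : (i : ℕ) + 1 < (z : ℕ) + 1 := c1
        have hc2 : (z : ℕ) + 1 < (j : ℕ) + 1 := c2
        omega

/-- Insert value `v` at the end of the permutation `σ` (shifting larger values up). -/
def insertLast {n : ℕ} (σ : Equiv.Perm (Fin n)) (v : Fin (n+1)) : Equiv.Perm (Fin (n+1)) :=
  ((finSuccEquiv' (Fin.last n)).trans (Equiv.optionCongr σ)).trans (finSuccEquiv' v).symm

@[simp] lemma insertLast_last {n : ℕ} (σ : Equiv.Perm (Fin n)) (v : Fin (n+1)) :
    insertLast σ v (Fin.last n) = v := by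
  simp [insertLast, finSuccEquiv'_at, finSuccEquiv'_symm_none]

@[simp] lemma insertLast_castSucc {n : ℕ} (σ : Equiv.Perm (Fin n)) (v : Fin (n+1)) (i : Fin n) :
    insertLast σ v (Fin.castSucc i) = v.succAbove (σ i) := by
  have h : (finSuccEquiv' (Fin.last n)) (Fin.castSucc i) = some i :=
    finSuccEquiv'_below (Fin.castSucc_lt_last i)
  simp [insertLast, h, finSuccEquiv'_symm_some]

noncomputable def insertLastEquiv (n : ℕ) :
    Equiv.Perm (Fin n) × Fin (n+1) ≃ Equiv.Perm (Fin (n+1)) :=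
  Equiv.ofBijective (fun p => insertLast p.1 p.2) <| by
    rw [Fintype.bijective_iff_injective_and_card]
    constructor
    · rintro ⟨σ, v⟩ ⟨σ', v'⟩ h
      have hv : v = v' := by
        simpa using DFunLike.congr_fun h (Fin.last n)
      subst hv
      have hσ : σ = σ' := by
        ext i
        have := DFunLike.congr_fun h (Fin.castSucc i)
        simp only [insertLast_castSucc] at this
        exact congrArg Fin.val (Fin.succAbove_right_injective this)
      simp [hσ]
    · simp [Fintype.card_perm, Nat.factorial_succ, Nat.mul_comm]

@[simp] lemma insertLastEquiv_apply {n : ℕ} (p : Equiv.Perm (Fin n) × Fin (n+1)) :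
    insertLastEquiv n p = insertLast p.1 p.2 := rfl

/-- The new bad configuration possibly created by inserting `v` at the end. -/
def BadEnd {n : ℕ} (σ : Equiv.Perm (Fin (n+1))) (v : Fin (n+2)) : Prop :=
  v.succAbove (σ (Fin.last n)) < v ∧
  ∀ z : Fin (n+1), z < Fin.last n → v < v.succAbove (σ z)

instance {n : ℕ} (σ : Equiv.Perm (Fin (n+1))) (v : Fin (n+2)) : Decidable (BadEnd σ v) := by
  unfold BadEnd; infer_instance

lemma bad_insertLast {n : ℕ} (σ : Equiv.Perm (Fin (n+1))) (v : Fin (n+2)) :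
    Bad (insertLast σ v) ↔ Bad σ ∨ BadEnd σ v := by
  constructor
  · rintro ⟨i, j, hij, hlt, hall⟩
    by_cases hj : j = Fin.last (n+1)
    · subst hj
      have hi : i = Fin.castSucc (Fin.last n) := by
        apply Fin.ext
        simp only [Fin.coe_castSucc, Fin.val_last]
        simp only [Fin.val_last] at hij
        omega
      subst hi
      right
      refine ⟨?_, ?_⟩
      · simpa [insertLast_castSucc, insertLast_last] using hlt
      · intro z hz
        have := hall (Fin.castSucc z) (Fin.castSucc_lt_castSucc_iff.mpr hz)
        simpa [insertLast_castSucc, insertLast_last] using this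
    · left
      obtain ⟨j', rfl⟩ := Fin.exists_castSucc_eq.mpr hj
      have hi : i ≠ Fin.last (n+1) := by
        intro h; subst h
        have := j'.isLt
        simp [Fin.val_last] at hij
        omega
      obtain ⟨i', rfl⟩ := Fin.exists_castSucc_eq.mpr hi
      refine ⟨i', j', by simpa using hij, ?_, ?_⟩
      · have := hlt
        simp only [insertLast_castSucc] at this
        exact (Fin.succAbove_lt_succAbove_iff (p := v)).mp this
      · intro z hz
        have := hall (Fin.castSucc z) (Fin.castSucc_lt_castSucc_iff.mpr hz)
        simp only [insertLast_castSucc] at this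
        exact (Fin.succAbove_lt_succAbove_iff (p := v)).mp this
  · rintro (⟨i, j, hij, hlt, hall⟩ | ⟨h1, h2⟩)
    · refine ⟨Fin.castSucc i, Fin.castSucc j, by simpa using hij, ?_, ?_⟩
      · simp only [insertLast_castSucc]
        exact Fin.strictMono_succAbove v hlt
      · intro z hz
        have hzl : z ≠ Fin.last (n+1) := by
          intro h; subst h
          have := i.isLt
          have := Fin.lt_def.mp hz
          simp [Fin.val_last] at this
          omega
        obtain ⟨z', rfl⟩ := Fin.exists_castSucc_eq.mpr hzl
        simp only [insertLast_castSucc]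
        exact Fin.strictMono_succAbove v (hall z' (Fin.castSucc_lt_castSucc_iff.mp hz))
    · refine ⟨Fin.castSucc (Fin.last n), Fin.last (n+1), by simp, ?_, ?_⟩
      · simpa [insertLast_castSucc, insertLast_last] using h1
      · intro z hz
        have hzl : z ≠ Fin.last (n+1) := by
          intro h; subst h
          have := Fin.lt_def.mp hz
          simp [Fin.val_last] at this
        obtain ⟨z', rfl⟩ := Fin.exists_castSucc_eq.mpr hzl
        simp only [insertLast_castSucc, insertLast_last]
        exact h2 z' (Fin.castSucc_lt_castSucc_iff.mp hz)

lemma succAbove_val {n : ℕ} (v : Fin (n+1)) (u : Fin n) :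
    ((v.succAbove u : Fin (n+1)) : ℕ) = if (u : ℕ) < (v : ℕ) then (u : ℕ) else (u : ℕ) + 1 := by
  by_cases h : Fin.castSucc u < v
  · rw [Fin.succAbove_of_castSucc_lt _ _ h, Fin.coe_castSucc,
      if_pos (by simpa [Fin.lt_def] using h)]
  · rw [Fin.succAbove_of_le_castSucc _ _ (le_of_not_gt h), Fin.val_succ,
      if_neg (by simpa [Fin.lt_def] using h)]

lemma not_badEnd_zero {n : ℕ} (σ : Equiv.Perm (Fin (n+1))) :
    ¬ BadEnd σ (0 : Fin (n+2)) := by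
  rintro ⟨h1, -⟩
  exact Fin.not_lt_zero _ h1

lemma badEnd_iff {m : ℕ} (σ : Equiv.Perm (Fin (m+2))) (v : Fin (m+3)) :
    BadEnd σ v ↔ σ (Fin.last (m+1)) = 0 ∧ v = 1 := by
  constructor
  · rintro ⟨h1, h2⟩
    by_cases hσ : σ (Fin.last (m+1)) = 0
    · refine ⟨hσ, ?_⟩
      have hv0 : (v : ℕ) ≠ 0 := by
        intro h0
        have := Fin.lt_def.mp h1
        omega
      set z₁ := σ.symm 1 with hz₁def
      have hz₁ : σ z₁ = 1 := σ.apply_symm_apply 1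
      have hne : z₁ ≠ Fin.last (m+1) := by
        intro h; rw [h, hσ] at hz₁
        have := congrArg Fin.val hz₁
        simp [Fin.val_one] at this
      have hlt := h2 z₁ (lt_of_le_of_ne (Fin.le_last _) hne)
      have hval := succAbove_val v (σ z₁)
      have h1v : ((σ z₁ : Fin (m+2)) : ℕ) = 1 := by rw [hz₁]; simp [Fin.val_one]
      have hvlt := Fin.lt_def.mp hlt
      apply Fin.ext
      simp only [Fin.val_one]
      rw [h1v] at hval
      split_ifs at hval <;> omega
    · exfalso
      set z₀ := σ.symm 0 with hz₀def
      have hz₀ : σ z₀ = 0 := σ.apply_symm_apply 0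
      have hne : z₀ ≠ Fin.last (m+1) := by
        intro h; rw [h] at hz₀; exact hσ hz₀
      have hlt := h2 z₀ (lt_of_le_of_ne (Fin.le_last _) hne)
      have hval := succAbove_val v (σ z₀)
      have h0v : ((σ z₀ : Fin (m+2)) : ℕ) = 0 := by rw [hz₀]; rfl
      have hvlt := Fin.lt_def.mp hlt
      have h1' := Fin.lt_def.mp h1
      have hval' := succAbove_val v (σ (Fin.last (m+1)))
      rw [h0v] at hval
      split_ifs at hval <;> split_ifs at hval' <;> omega
  · rintro ⟨h0, rfl⟩
    constructor
    · rw [h0]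
      rw [Fin.lt_def, succAbove_val]
      simp [Fin.val_one]
    · intro z hz
      have hne : σ z ≠ 0 := by
        intro h
        rw [← h0] at h
        exact (ne_of_lt hz) (σ.injective h)
      have h1 : 1 ≤ ((σ z : Fin (m+2)) : ℕ) := by
        rcases Nat.eq_zero_or_pos ((σ z : Fin (m+2)) : ℕ) with h | h
        · exact absurd (Fin.ext h) hne
        · exact h
      rw [Fin.lt_def, succAbove_val]
      simp only [Fin.val_one]
      simp only [show ¬ (((σ z : Fin (m+2)) : ℕ) < 1) by omega, if_false]; omega

/-- Length-`n` avoiders, in concrete form. -/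
abbrev Av (n : ℕ) := {π : Equiv.Perm (Fin n) // ¬ Bad π}

lemma card_split {α : Type*} [Fintype α] (P Q : α → Prop) [DecidablePred P] [DecidablePred Q] :
    Fintype.card {x // P x ∧ Q x} + Fintype.card {x // P x ∧ ¬ Q x}
      = Fintype.card {x // P x} := by
  classical
  simp only [Fintype.card_subtype]
  rw [← Finset.filter_filter, ← Finset.filter_filter,
    Finset.card_filter_add_card_filter_not]

def dropSndEquiv {α β : Type*} (P : α → Prop) (c : β) :
    {p : α × β // P p.1 ∧ p.2 = c} ≃ {x // P x} where
  toFun p := ⟨p.1.1, p.2.1⟩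
  invFun x := ⟨(x.1, c), x.2, rfl⟩
  left_inv := by rintro ⟨⟨x, y⟩, h1, rfl⟩; rfl
  right_inv x := rfl

lemma main (m : ℕ) :
    Fintype.card (Av (m+3)) + Fintype.card (Av (m+1))
      = (m+3) * Fintype.card (Av (m+2)) := by
  classical
  have e1 : Av (m+3) ≃
      {p : Equiv.Perm (Fin (m+2)) × Fin (m+3) // ¬ Bad p.1 ∧ ¬ BadEnd p.1 p.2} :=
    ((insertLastEquiv (m+2)).subtypeEquiv
        (p := fun p => ¬ Bad (insertLast p.1 p.2)) (q := fun π => ¬ Bad π)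
        (fun p => by simp only [insertLastEquiv_apply])).symm.trans
      (Equiv.subtypeEquivRight (fun p => by rw [bad_insertLast]; tauto))
  have e2b : {σ : Equiv.Perm (Fin (m+2)) // ¬ Bad σ ∧ σ (Fin.last (m+1)) = 0} ≃ Av (m+1) :=
    ((insertLastEquiv (m+1)).subtypeEquiv
        (p := fun p => ¬ Bad (insertLast p.1 p.2) ∧ (insertLast p.1 p.2) (Fin.last (m+1)) = 0)
        (q := fun σ => ¬ Bad σ ∧ σ (Fin.last (m+1)) = 0)
        (fun p => by simp only [insertLastEquiv_apply])).symm.trans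
      ((Equiv.subtypeEquivRight (fun p => by
          rw [bad_insertLast, insertLast_last]
          constructor
          · rintro ⟨h1, h2⟩; exact ⟨fun h => h1 (Or.inl h), h2⟩
          · rintro ⟨h1, h2⟩
            refine ⟨?_, h2⟩
            rintro (h | h)
            · exact h1 h
            · rw [h2] at h; exact not_badEnd_zero _ h)).trans
        (dropSndEquiv (fun σ => ¬ Bad σ) 0))
  have e2 : {p : Equiv.Perm (Fin (m+2)) × Fin (m+3) // ¬ Bad p.1 ∧ BadEnd p.1 p.2} ≃ Av (m+1) :=
    ((Equiv.subtypeEquivRight (fun p => by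
        rw [badEnd_iff]
        constructor
        · rintro ⟨h1, h2, h3⟩; exact ⟨⟨h1, h2⟩, h3⟩
        · rintro ⟨⟨h1, h2⟩, h3⟩; exact ⟨h1, h2, h3⟩)).trans
      (dropSndEquiv (fun σ : Equiv.Perm (Fin (m+2)) => ¬ Bad σ ∧ σ (Fin.last (m+1)) = 0) 1)).trans
      e2b
  have e3 : {p : Equiv.Perm (Fin (m+2)) × Fin (m+3) // ¬ Bad p.1} ≃ Av (m+2) × Fin (m+3) :=
    Equiv.prodSubtypeFstEquivSubtypeProd (p := fun σ : Equiv.Perm (Fin (m+2)) => ¬ Bad σ)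
  have hsplit := card_split (fun p : Equiv.Perm (Fin (m+2)) × Fin (m+3) => ¬ Bad p.1)
      (fun p => BadEnd p.1 p.2)
  rw [Fintype.card_congr e2, Fintype.card_congr e1.symm, Fintype.card_congr e3,
    Fintype.card_prod, Fintype.card_fin] at hsplit
  rw [Nat.mul_comm]
  omega

end Stmt18Aux

/-- The number `a n` of permutations of length `n` avoiding
`(12, {(0,0),(0,1),(1,0),(1,1),(1,2)})` satisfies `a 0 = a 1 = 1` and `a n = n·a (n-1) − a (n-2)` for `n ≥ 2`. -/
theorem stmt18 (a : ℕ → ℕ)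
    (ha : ∀ n, a n = Nat.card {π : Equiv.Perm (Fin n) //
      MeshAvoids (1 : Equiv.Perm (Fin 2)) {(0,0),(0,1),(1,0),(1,1),(1,2)} π}) :
    a 0 = 1 ∧ a 1 = 1 ∧ ∀ n, 2 ≤ n → a n = n * a (n - 1) - a (n - 2) := by
  have hcard : ∀ n : ℕ, a n = Fintype.card (Stmt18Aux.Av n) := by
    intro n
    have key : ∀ π : Equiv.Perm (Fin n),
        MeshAvoids (1 : Equiv.Perm (Fin 2)) {(0,0),(0,1),(1,0),(1,1),(1,2)} π ↔
          ¬ Stmt18Aux.Bad π :=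
      fun π => not_congr (Stmt18Aux.mesh_iff_bad π)
    rw [ha n, Nat.card_congr (Equiv.subtypeEquivRight key), Nat.card_eq_fintype_card]
  refine ⟨?_, ?_, ?_⟩
  · rw [hcard]; decide
  · rw [hcard]; decide
  · intro n hn
    obtain ⟨k, rfl⟩ : ∃ k, n = k + 2 := ⟨n - 2, by omega⟩
    cases k with
    | zero =>
      show a 2 = 2 * a (2 - 1) - a (2 - 2)
      rw [hcard, hcard, hcard]
      norm_num
      decide
    | succ m =>
      have h := Stmt18Aux.main m
      show a (m + 3) = (m + 3) * a (m + 3 - 1) - a (m + 3 - 2)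
      have h1 : m + 3 - 1 = m + 2 := rfl
      have h2 : m + 3 - 2 = m + 1 := rfl
      rw [h1, h2, hcard, hcard, hcard]
      omega
end

section
/- A permutation π of length n avoids the mesh pattern (12, {(0,1),(0,2),(1,1),(1,2),(2,0)}) if and only if π is connected, i.e. there is no j with 0 < j < n such that π maps the set {1,…,j} onto {1,…,j}. Consequently, for every n the number of permutations of length n avoiding this pattern equals the number of connected permutations of length n. -/
/-- A permutation of length `n` is connected if it has no invariant set, i.e.
no `j` with `0 < j < n` such that `π` maps `{1,…,j}` onto `{1,…,j}`
(0-indexed: the set of indices with value `< j`). -/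
def IsConnectedPerm {n : ℕ} (π : Equiv.Perm (Fin n)) : Prop :=
  ¬ ∃ j : ℕ, 0 < j ∧ j < n ∧
      (⇑π '' {i : Fin n | (i : ℕ) < j}) = {i : Fin n | (i : ℕ) < j}

/-- Occurrence of our mesh pattern, in elementary form. -/
lemma meshOcc_iff {n : ℕ} (π : Equiv.Perm (Fin n)) :
    MeshOccursIn (1 : Equiv.Perm (Fin 2)) {(0,1),(0,2),(1,1),(1,2),(2,0)} π ↔
    ∃ x1 x2 : Fin n, x1 < x2 ∧ π x1 < π x2 ∧
      (∀ z, z < x2 → z ≠ x1 → π z < π x1) ∧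
      (∀ z, x2 < z → π x1 < π z) := by
  constructor
  · rintro ⟨x, hmono, hpat, hbox⟩
    have hlt : x 0 < x 1 := hmono (by decide)
    have hplt : π (x 0) < π (x 1) := (hpat 0 1).2 (by decide)
    refine ⟨x 0, x 1, hlt, hplt, ?_, ?_⟩
    · intro z hz hne
      have hne0 : (π z : ℕ) ≠ (π (x 0) : ℕ) :=
        fun h => hne (π.injective (Fin.val_injective h))
      have hne1 : (z : ℕ) ≠ (x 1 : ℕ) :=
        fun h => absurd (Fin.lt_def.mp hz) (by omega)
      have hzv : (z : ℕ) < (x 1 : ℕ) := Fin.lt_def.mp hz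
      have hnex : (z : ℕ) ≠ (x 0 : ℕ) := fun h => hne (Fin.val_injective h)
      have hpn : (π (x 0) : ℕ) < (π (x 1) : ℕ) := Fin.lt_def.mp hplt
      have hne1' : (π z : ℕ) ≠ (π (x 1) : ℕ) :=
        fun h => hne1 (congrArg Fin.val (π.injective (Fin.val_injective h)))
      have hzn : (π z : ℕ) < n := (π z).isLt
      rw [Fin.lt_def]
      rcases lt_or_gt_of_ne hnex with hc | hc
      · -- z before x 0 : boxes (0,1) and (0,2)
        have b1 := hbox (0,1) (by simp) z
        have b2 := hbox (0,2) (by simp) z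
        simp [posOf, valOf, Equiv.Perm.one_symm, Equiv.Perm.one_apply] at b1 b2
        omega
      · -- x 0 < z < x 1 : boxes (1,1) and (1,2)
        have b1 := hbox (1,1) (by simp) z
        have b2 := hbox (1,2) (by simp) z
        simp [posOf, valOf, Equiv.Perm.one_symm, Equiv.Perm.one_apply] at b1 b2
        omega
    · intro z hz
      have hzv : (x 1 : ℕ) < (z : ℕ) := Fin.lt_def.mp hz
      have hnex : (z : ℕ) ≠ (x 0 : ℕ) := by
        have := Fin.lt_def.mp hlt; omega
      have hne0 : (π z : ℕ) ≠ (π (x 0) : ℕ) :=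
        fun h => hnex (congrArg Fin.val (π.injective (Fin.val_injective h)))
      have b := hbox (2,0) (by simp) z
      simp [posOf, valOf, Equiv.Perm.one_symm, Equiv.Perm.one_apply] at b
      rw [Fin.lt_def]
      have hzn : (z : ℕ) < n := z.isLt
      omega
  · rintro ⟨x1, x2, h12, hp, hlow, hhigh⟩
    refine ⟨![x1, x2], ?_, ?_, ?_⟩
    · intro a b hab
      fin_cases a <;> fin_cases b <;> simp_all
    · intro a b
      fin_cases a <;> fin_cases b <;>
        simp [hp, asymm hp, lt_irrefl]
    · rintro ⟨r1, r2⟩ hr z hcon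
      have h12' : (x1 : ℕ) < (x2 : ℕ) := Fin.lt_def.mp h12
      have hp' : (π x1 : ℕ) < (π x2 : ℕ) := Fin.lt_def.mp hp
      simp only [Set.mem_insert_iff, Set.mem_singleton_iff, Prod.mk.injEq] at hr
      rcases hr with ⟨rfl, rfl⟩ | ⟨rfl, rfl⟩ | ⟨rfl, rfl⟩ | ⟨rfl, rfl⟩ | ⟨rfl, rfl⟩ <;>
        simp [posOf, valOf, Equiv.Perm.one_symm, Equiv.Perm.one_apply] at hcon
      · -- (0,1): z < x1, π x1 < π z < π x2
        have hzx : z < x2 := Fin.lt_def.mpr (by omega)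
        have hzne : z ≠ x1 := fun h => by subst h; omega
        have := Fin.lt_def.mp (hlow z hzx hzne); omega
      · -- (0,2): z < x1, π z > π x2
        have hzx : z < x2 := Fin.lt_def.mpr (by omega)
        have hzne : z ≠ x1 := fun h => by subst h; omega
        have := Fin.lt_def.mp (hlow z hzx hzne); omega
      · -- (1,1): x1 < z < x2, π x1 < π z < π x2
        have hzx : z < x2 := Fin.lt_def.mpr (by omega)
        have hzne : z ≠ x1 := fun h => by subst h; omega
        have := Fin.lt_def.mp (hlow z hzx hzne); omega
      · -- (1,2)
        have hzx : z < x2 := Fin.lt_def.mpr (by omega)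
        have hzne : z ≠ x1 := fun h => by subst h; omega
        have := Fin.lt_def.mp (hlow z hzx hzne); omega
      · -- (2,0): x2 < z, π z < π x1
        have hzx : x2 < z := Fin.lt_def.mpr (by omega)
        have := Fin.lt_def.mp (hhigh z hzx); omega

/-- Occurrence is equivalent to non-connectedness. -/
lemma meshOcc_iff_not_connected {n : ℕ} (π : Equiv.Perm (Fin n)) :
    MeshOccursIn (1 : Equiv.Perm (Fin 2)) {(0,1),(0,2),(1,1),(1,2),(2,0)} π ↔
    ∃ j : ℕ, 0 < j ∧ j < n ∧
      (⇑π '' {i : Fin n | (i : ℕ) < j}) = {i : Fin n | (i : ℕ) < j} := by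
  rw [meshOcc_iff]
  constructor
  · rintro ⟨x1, x2, h12, hp, hlow, hhigh⟩
    have h12' : (x1 : ℕ) < (x2 : ℕ) := Fin.lt_def.mp h12
    have hp' : (π x1 : ℕ) < (π x2 : ℕ) := Fin.lt_def.mp hp
    have key : ⇑π '' {i : Fin n | (i : ℕ) < (x2 : ℕ)}
        = {v : Fin n | (v : ℕ) ≤ (π x1 : ℕ)} := by
      ext v
      constructor
      · rintro ⟨i, hi, rfl⟩
        simp only [Set.mem_setOf_eq] at hi ⊢
        rcases eq_or_ne i x1 with rfl | hne
        · exact le_refl _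
        · exact le_of_lt (Fin.lt_def.mp (hlow i (Fin.lt_def.mpr hi) hne))
      · intro hv
        simp only [Set.mem_setOf_eq] at hv
        refine ⟨π.symm v, ?_, by simp⟩
        simp only [Set.mem_setOf_eq]
        by_contra hcon
        push_neg at hcon
        have hx2le : (x2 : ℕ) ≤ (π.symm v : ℕ) := hcon
        rcases eq_or_lt_of_le hx2le with heq | hlt
        · have : x2 = π.symm v := Fin.val_injective heq
          have : π x2 = v := by rw [this]; simp
          omega
        · have := Fin.lt_def.mp (hhigh (π.symm v) (Fin.lt_def.mpr hlt))
          simp at this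
          omega
    have hcard : (x2 : ℕ) = (π x1 : ℕ) + 1 := by
      have e1 : {i : Fin n | (i : ℕ) < (x2 : ℕ)} = ↑(Finset.Iio x2) := by
        ext i
        simp only [Set.mem_setOf_eq, Finset.coe_Iio, Set.mem_Iio, Fin.lt_def]
      have e2 : {v : Fin n | (v : ℕ) ≤ (π x1 : ℕ)} = ↑(Finset.Iic (π x1)) := by
        ext v
        simp only [Set.mem_setOf_eq, Finset.coe_Iic, Set.mem_Iic, Fin.le_def]
      have := congrArg Set.ncard key
      rw [Set.ncard_image_of_injective _ π.injective, e1, e2,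
        Set.ncard_coe_finset, Set.ncard_coe_finset, Fin.card_Iio, Fin.card_Iic] at this
      omega
    refine ⟨(x2 : ℕ), by omega, x2.isLt, ?_⟩
    rw [key]
    ext v; simp only [Set.mem_setOf_eq]; omega
  · rintro ⟨j, hj0, hjn, himg⟩
    have hmem : ∀ i : Fin n, (i : ℕ) < j ↔ (π i : ℕ) < j := by
      intro i
      constructor
      · intro hi
        have : π i ∈ ⇑π '' {i : Fin n | (i : ℕ) < j} := ⟨i, hi, rfl⟩
        rw [himg] at this; exact this
      · intro hi
        have : π i ∈ {i : Fin n | (i : ℕ) < j} := hi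
        rw [← himg] at this
        obtain ⟨a, ha, hae⟩ := this
        rwa [π.injective hae] at ha
    set x2 : Fin n := ⟨j, hjn⟩ with hx2
    set w : Fin n := ⟨j - 1, by omega⟩ with hw
    set x1 : Fin n := π.symm w with hx1
    have hπx1 : π x1 = w := by simp [hx1]
    have hπx1v : (π x1 : ℕ) = j - 1 := by rw [hπx1]
    have hx1j : (x1 : ℕ) < j := (hmem x1).mpr (by omega)
    have hx2v : (x2 : ℕ) = j := rfl
    have hπx2 : j ≤ (π x2 : ℕ) := by
      by_contra hcon
      push_neg at hcon
      have := (hmem x2).mpr hcon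
      omega
    refine ⟨x1, x2, Fin.lt_def.mpr (by omega), Fin.lt_def.mpr (by omega), ?_, ?_⟩
    · intro z hz hne
      have hzj : (z : ℕ) < j := by have := Fin.lt_def.mp hz; omega
      have hπzj : (π z : ℕ) < j := (hmem z).mp hzj
      have hπzne : (π z : ℕ) ≠ j - 1 := by
        intro h
        apply hne
        have : π z = w := Fin.val_injective h
        rw [hx1, ← this]; simp
      exact Fin.lt_def.mpr (by omega)
    · intro z hz
      have hzj : j < (z : ℕ) := by have := Fin.lt_def.mp hz; omega
      have : ¬ ((π z : ℕ) < j) := fun h => by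
        have := (hmem z).mpr h; omega
      exact Fin.lt_def.mpr (by omega)

/-- A permutation avoids
`(12, {(0,1),(0,2),(1,1),(1,2),(2,0)})` iff it is connected; hence the number
of avoiders of length `n` equals the number of connected permutations of
length `n`. -/
theorem stmt19 :
    (∀ (n : ℕ) (π : Equiv.Perm (Fin n)),
      MeshAvoids (1 : Equiv.Perm (Fin 2)) {(0,1),(0,2),(1,1),(1,2),(2,0)} π ↔
        IsConnectedPerm π) ∧
    ∀ n : ℕ,
      Nat.card {π : Equiv.Perm (Fin n) //
        MeshAvoids (1 : Equiv.Perm (Fin 2)) {(0,1),(0,2),(1,1),(1,2),(2,0)} π} =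
      Nat.card {π : Equiv.Perm (Fin n) // IsConnectedPerm π} := by
  have key : ∀ (n : ℕ) (π : Equiv.Perm (Fin n)),
      MeshAvoids (1 : Equiv.Perm (Fin 2)) {(0,1),(0,2),(1,1),(1,2),(2,0)} π ↔
        IsConnectedPerm π := fun n π => not_congr (meshOcc_iff_not_connected π)
  exact ⟨key, fun n => Nat.card_congr (Equiv.subtypeEquivRight fun π => key n π)⟩
end
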